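/- Let n ≥ 2 and B ≥ 1 be integers. Let q : Fin B → ℝ be real numbers (the bootstrap OOB scores), let q̄ = (1/B)·Σ_b q_b and V_B = (1/B)·Σ_b (q_b − q̄)². Let u, v : Fin B → ℝ be real weight sequences (the bootstrap counts of data point i and data point j), let ψ_i, ψ_j, h be real numbers (the Data-OOB values of points i and j and the overall OOB estimate), and define the infinitesimal jackknife influence values by ψIJ_i = (2 + 1/(n−1))·(ψ_i − h)/n + (1 − 1/n)^{−n}·(1/B)·Σ_b (u_b − 1)·q_b and ψIJ_j = (2 + 1/(n−1))·(ψ_j − h)/n + (1 − 1/n)^{−n}·(1/B)·Σ_b (v_b − 1)·q_b. Assume Σ_b (u_b − v_b) = 0 and (1/B)·Σ_b (u_b − v_b)² ≤ 2 − 4/n. Then ψIJ_i > ψIJ_j + 4·√2·√V_B implies ψ_i > ψ_j. -/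

import Mathlib

open Finset

/-- `(1 - 1/n)^(-n) ≤ 4` for `n ≥ 2`. -/
lemma aux_zpow_le_four (n : ℕ) (hn : 2 ≤ n) :
    (1 - 1 / (n : ℝ)) ^ (-(n : ℤ)) ≤ 4 := by
  have hn2 : (2 : ℝ) ≤ (n : ℝ) := by exact_mod_cast hn
  have hx : (0 : ℝ) < 1 - 1 / (n : ℝ) := by
    have : 1 / (n : ℝ) ≤ 1 / 2 := by
      apply one_div_le_one_div_of_le <;> linarith
    linarith
  have hxn : (1 / 4 : ℝ) ≤ (1 - 1 / (n : ℝ)) ^ n := by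
    rcases Nat.lt_or_ge n 4 with h4 | h4
    · interval_cases n <;> norm_num
    · have hn4 : (4 : ℝ) ≤ (n : ℝ) := by exact_mod_cast h4
      have hm : (0 : ℝ) < (n : ℝ) - 1 := by linarith
      have hinv : (1 - 1 / (n : ℝ))⁻¹ = 1 + 1 / ((n : ℝ) - 1) := by
        have hn0 : (n : ℝ) ≠ 0 := by linarith
        field_simp
        ring
      have h1 : (1 + 1 / ((n : ℝ) - 1)) ^ n ≤ Real.exp (1 / ((n : ℝ) - 1)) ^ n := by
        apply pow_le_pow_left₀ (by positivity)
        have := Real.add_one_le_exp (1 / ((n : ℝ) - 1))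
        linarith
      have h2 : Real.exp (1 / ((n : ℝ) - 1)) ^ n = Real.exp ((n : ℝ) * (1 / ((n : ℝ) - 1))) := by
        rw [Real.exp_nat_mul]
      have h3 : (n : ℝ) * (1 / ((n : ℝ) - 1)) ≤ 4 / 3 := by
        rw [mul_one_div, div_le_div_iff₀ hm (by norm_num)]
        linarith
      have hexp43 : Real.exp ((4 : ℝ) / 3) < 4 := by
        have hc : Real.exp ((4 : ℝ) / 3) ^ (3 : ℕ) = Real.exp 4 := by
          rw [← Real.exp_nat_mul]; norm_num
        have he4 : Real.exp (4 : ℝ) < 64 := by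
          have h14 : Real.exp (4 : ℝ) = Real.exp 1 ^ (4 : ℕ) := by
            rw [← Real.exp_nat_mul]; norm_num
          have hlt := Real.exp_one_lt_d9
          have hp : Real.exp 1 ^ (4 : ℕ) < (2.7182818286 : ℝ) ^ (4 : ℕ) :=
            pow_lt_pow_left₀ hlt (Real.exp_pos 1).le (by norm_num)
          have : (2.7182818286 : ℝ) ^ (4 : ℕ) < 64 := by norm_num
          linarith
        have hcube : Real.exp ((4 : ℝ) / 3) ^ (3 : ℕ) < 4 ^ (3 : ℕ) := by
          rw [hc]; norm_num; linarith
        exact lt_of_pow_lt_pow_left₀ 3 (by norm_num) hcube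
      have hfull : ((1 - 1 / (n : ℝ))⁻¹) ^ n ≤ 4 := by
        rw [hinv]
        calc (1 + 1 / ((n : ℝ) - 1)) ^ n
            ≤ Real.exp ((n : ℝ) * (1 / ((n : ℝ) - 1))) := by rw [← h2]; exact h1
          _ ≤ Real.exp ((4 : ℝ) / 3) := Real.exp_le_exp.mpr h3
          _ ≤ 4 := hexp43.le
      have hxpos : (0 : ℝ) < ((1 - 1 / (n : ℝ))⁻¹) ^ n := by positivity
      have h5 : (4 : ℝ)⁻¹ ≤ (((1 - 1 / (n : ℝ))⁻¹) ^ n)⁻¹ := inv_anti₀ hxpos hfull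
      rw [inv_pow, inv_inv] at h5
      linarith
  have heq : (1 - 1 / (n : ℝ)) ^ (-(n : ℤ)) = ((1 - 1 / (n : ℝ)) ^ n)⁻¹ := by
    rw [zpow_neg, zpow_natCast]
  rw [heq]
  calc ((1 - 1 / (n : ℝ)) ^ n)⁻¹ ≤ ((1/4 : ℝ))⁻¹ := inv_anti₀ (by norm_num) hxn
    _ = 4 := by norm_num

/-- Deterministic core of Proposition 1 (order consistency between Data-OOB and the
infinitesimal jackknife influence function). Given bootstrap OOB scores `q` with mean
`q̄` and empirical variance `V_B`, weight sequences `u, v` (bootstrap counts of two data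
points) satisfying `Σ_b (u_b − v_b) = 0` and `(1/B)·Σ_b (u_b − v_b)² ≤ 2 − 4/n`, and the
infinitesimal jackknife influence values `ψIJ_i, ψIJ_j` defined from the Data-OOB values
`ψ_i, ψ_j` and the OOB estimate `h`, the strict gap
`ψIJ_i > ψIJ_j + 4·√2·√V_B` implies `ψ_i > ψ_j`. -/
theorem dataOOB_order_consistency (n B : ℕ) (hn : 2 ≤ n) (hB : 1 ≤ B)
    (q u v : Fin B → ℝ) (ψi ψj h : ℝ)
    (qbar VB ψIJi ψIJj : ℝ)
    (hqbar : qbar = (1 / (B : ℝ)) * ∑ b, q b)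
    (hVB : VB = (1 / (B : ℝ)) * ∑ b, (q b - qbar) ^ 2)
    (hψIJi : ψIJi = (2 + 1 / ((n : ℝ) - 1)) * (ψi - h) / n +
      (1 - 1 / (n : ℝ)) ^ (-(n : ℤ)) * ((1 / (B : ℝ)) * ∑ b, (u b - 1) * q b))
    (hψIJj : ψIJj = (2 + 1 / ((n : ℝ) - 1)) * (ψj - h) / n +
      (1 - 1 / (n : ℝ)) ^ (-(n : ℤ)) * ((1 / (B : ℝ)) * ∑ b, (v b - 1) * q b))
    (hsum : ∑ b, (u b - v b) = 0)
    (hmoment : (1 / (B : ℝ)) * ∑ b, (u b - v b) ^ 2 ≤ 2 - 4 / (n : ℝ))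
    (hgap : ψIJi > ψIJj + 4 * Real.sqrt 2 * Real.sqrt VB) :
    ψi > ψj := by
  have hn2 : (2 : ℝ) ≤ (n : ℝ) := by exact_mod_cast hn
  have hB0 : (0 : ℝ) < (B : ℝ) := by
    have : (1 : ℝ) ≤ (B : ℝ) := by exact_mod_cast hB
    linarith
  have hx : (0 : ℝ) < 1 - 1 / (n : ℝ) := by
    have : 1 / (n : ℝ) ≤ 1 / 2 := by
      apply one_div_le_one_div_of_le <;> linarith
    linarith
  set a := (1 - 1 / (n : ℝ)) ^ (-(n : ℤ)) with ha_def
  have ha0 : 0 < a := zpow_pos hx _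
  have ha4 : a ≤ 4 := aux_zpow_le_four n hn
  -- rewrite the difference of the weighted sums
  have hdiff : (1 / (B : ℝ)) * (∑ b, (u b - 1) * q b)
      - (1 / (B : ℝ)) * (∑ b, (v b - 1) * q b)
      = (1 / (B : ℝ)) * ∑ b, (u b - v b) * (q b - qbar) := by
    rw [← mul_sub]
    congr 1
    have h1 : ∑ b, (u b - v b) * (q b - qbar)
        = (∑ b, ((u b - 1) * q b - (v b - 1) * q b)) - qbar * ∑ b, (u b - v b) := by
      rw [Finset.mul_sum, ← Finset.sum_sub_distrib]
      apply Finset.sum_congr rfl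
      intro b _
      ring
    rw [h1, hsum, Finset.sum_sub_distrib]
    ring
  have hVB0 : 0 ≤ VB := by
    rw [hVB]
    apply mul_nonneg (by positivity)
    exact Finset.sum_nonneg fun b _ => sq_nonneg _
  -- Cauchy–Schwarz bound
  have hcs := Finset.sum_mul_sq_le_sq_mul_sq Finset.univ (fun b => u b - v b)
      (fun b => q b - qbar)
  have hD2 : ((1 / (B : ℝ)) * ∑ b, (u b - v b) * (q b - qbar)) ^ 2 ≤ 2 * VB := by
    have h2 : ((1 / (B : ℝ)) * ∑ b, (u b - v b) * (q b - qbar)) ^ 2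
        ≤ ((1 / (B : ℝ)) * ∑ b, (u b - v b) ^ 2) * VB := by
      rw [hVB]
      calc ((1 / (B : ℝ)) * ∑ b, (u b - v b) * (q b - qbar)) ^ 2
          = (1 / (B : ℝ)) ^ 2 * (∑ b, (u b - v b) * (q b - qbar)) ^ 2 := by ring
        _ ≤ (1 / (B : ℝ)) ^ 2 * ((∑ b, (u b - v b) ^ 2) * ∑ b, (q b - qbar) ^ 2) :=
            mul_le_mul_of_nonneg_left hcs (by positivity)
        _ = ((1 / (B : ℝ)) * ∑ b, (u b - v b) ^ 2) *
            ((1 / (B : ℝ)) * ∑ b, (q b - qbar) ^ 2) := by ring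
    have h3 : ((1 / (B : ℝ)) * ∑ b, (u b - v b) ^ 2) * VB ≤ 2 * VB := by
      apply mul_le_mul_of_nonneg_right _ hVB0
      have h4 : 0 < 4 / (n : ℝ) := by positivity
      linarith
    linarith
  have hDle : (1 / (B : ℝ)) * ∑ b, (u b - v b) * (q b - qbar)
      ≤ Real.sqrt 2 * Real.sqrt VB := by
    set D := (1 / (B : ℝ)) * ∑ b, (u b - v b) * (q b - qbar)
    calc D ≤ |D| := le_abs_self D
      _ = Real.sqrt (D ^ 2) := (Real.sqrt_sq_eq_abs D).symm
      _ ≤ Real.sqrt (2 * VB) := Real.sqrt_le_sqrt hD2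
      _ = Real.sqrt 2 * Real.sqrt VB := Real.sqrt_mul (by norm_num) VB
  have haD : a * ((1 / (B : ℝ)) * ∑ b, (u b - v b) * (q b - qbar))
      ≤ 4 * Real.sqrt 2 * Real.sqrt VB := by
    calc a * ((1 / (B : ℝ)) * ∑ b, (u b - v b) * (q b - qbar))
        ≤ a * (Real.sqrt 2 * Real.sqrt VB) := mul_le_mul_of_nonneg_left hDle ha0.le
      _ ≤ 4 * (Real.sqrt 2 * Real.sqrt VB) :=
          mul_le_mul_of_nonneg_right ha4 (by positivity)
      _ = 4 * Real.sqrt 2 * Real.sqrt VB := by ring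
  -- key identity
  have hkey : (2 + 1 / ((n : ℝ) - 1)) * (ψi - ψj) / n
      = ψIJi - ψIJj - a * ((1 / (B : ℝ)) * ∑ b, (u b - v b) * (q b - qbar)) := by
    rw [hψIJi, hψIJj]
    linear_combination (-a) * hdiff
  have hpos : 0 < (2 + 1 / ((n : ℝ) - 1)) * (ψi - ψj) / n := by
    rw [hkey]
    linarith
  have hc : 0 < 2 + 1 / ((n : ℝ) - 1) := by
    have : 0 < (n : ℝ) - 1 := by linarith
    positivity
  by_contra hle
  push_neg at hle
  have hnp : (2 + 1 / ((n : ℝ) - 1)) * (ψi - ψj) / n ≤ 0 := by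
    apply div_nonpos_of_nonpos_of_nonneg
    · exact mul_nonpos_of_nonneg_of_nonpos hc.le (by linarith)
    · linarith
  linarith
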